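/- The maps ρ_{λ,k} form a representation of the centrally extended based loop group of the ax+b group: let t > 0, k ∈ ℝ, λ : [0,2π] → ℂ with Re λ, Im λ ∈ L², let α₁, α₂ ∈ C²([0,2π],ℝ) be based loops (αᵢ(0) = αᵢ(2π) = 0), b₁, b₂ ∈ L²([0,2π],ℝ), and s₁, s₂ ∈ ℝ. Then pointwise on all functions f : C₀ → ℂ, ρ_{λ,k}(α₁,b₁,s₁) ∘ ρ_{λ,k}(α₂,b₂,s₂) = ρ_{λ,k}( α₁+α₂, e^{α₁}b₂+b₁, s₁+s₂+k ∫₀^{2π} α₁′(u) α₂(u) du ), i.e. ρ_{λ,k} is multiplicative for the centrally extended group law with 2-cocycle k ∫₀^{2π} α₁′(u)α₂(u) du. -/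

import Mathlib

open MeasureTheory Real

/-- Extension of a function on `[0, 2π]` to `ℝ` (by `0` outside). -/
noncomputable def pathExt (x : Set.Icc (0 : ℝ) (2 * π) → ℝ) : ℝ → ℝ :=
  fun u => if h : u ∈ Set.Icc (0 : ℝ) (2 * π) then x ⟨u, h⟩ else 0

/-- The integration-by-parts form `⟨h,x⟩ = h'(2π)x(2π) - ∫₀^{2π} x(u)h''(u) du` of the
Stieltjes integral `∫₀^{2π} h'(u) dx(u)`. -/
noncomputable def wienerPairing (h : ℝ → ℝ) (x : Set.Icc (0 : ℝ) (2 * π) → ℝ) : ℝ :=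
  deriv h (2 * π) * pathExt x (2 * π)
    - ∫ u in (0 : ℝ)..(2 * π), pathExt x u * deriv (deriv h) u

/-- The operator `ρ_{λ,k}(α, b, s)` of the centrally extended based loop group of the
`ax+b` group, acting on functionals of paths `x` on `[0,2π]`:
`(ρ_{λ,k}(α,b,s)f)(x) = e^{is} · exp(ik(α(2π)x(2π) - ∫₀^{2π} x α' du))
  · exp(-(1/(4t))∫α'² - (1/(2t))⟨α,x⟩) · exp(∫₀^{2π} λ b e^{x(u)} du) · f(x+α)`. -/
noncomputable def wienerRhoC (t k : ℝ) (lam : ℝ → ℂ) (α b : ℝ → ℝ) (s : ℝ)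
    (f : (Set.Icc (0 : ℝ) (2 * π) → ℝ) → ℂ) (x : Set.Icc (0 : ℝ) (2 * π) → ℝ) : ℂ :=
  Complex.exp (Complex.I * (s : ℂ)) *
  Complex.exp (Complex.I * (k : ℂ) *
    ((α (2 * π) * pathExt x (2 * π)
        - ∫ u in (0 : ℝ)..(2 * π), pathExt x u * deriv α u : ℝ) : ℂ)) *
  Complex.exp (((-(1 / (4 * t)) * ∫ u in (0 : ℝ)..(2 * π), (deriv α u) ^ 2)
      - (1 / (2 * t)) * wienerPairing α x : ℝ)) *
  Complex.exp (∫ u in (0 : ℝ)..(2 * π), lam u * (b u : ℂ) *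
      Complex.exp ((pathExt x u : ℝ) : ℂ)) *
  f (x + fun u => α u.1)

section Aux

lemma pathExt_apply_of_mem (x : Set.Icc (0 : ℝ) (2 * π) → ℝ) {u : ℝ}
    (hu : u ∈ Set.Icc (0 : ℝ) (2 * π)) : pathExt x u = x ⟨u, hu⟩ := dif_pos hu

lemma pathExt_continuousOn (x : Set.Icc (0 : ℝ) (2 * π) → ℝ) (hx : Continuous x) :
    ContinuousOn (pathExt x) (Set.Icc (0 : ℝ) (2 * π)) := by
  have h02 : (0 : ℝ) ≤ 2 * π := by positivity
  have heq : Set.EqOn (pathExt x) (Set.IccExtend h02 x) (Set.Icc (0 : ℝ) (2 * π)) := by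
    intro u hu
    rw [pathExt_apply_of_mem x hu, Set.IccExtend_of_mem h02 x hu]
  exact (hx.Icc_extend').continuousOn.congr heq

lemma pathExt_measurable (x : Set.Icc (0 : ℝ) (2 * π) → ℝ) (hx : Continuous x) :
    Measurable (pathExt x) := by
  have h02 : (0 : ℝ) ≤ 2 * π := by positivity
  have heq : pathExt x = (Set.Icc (0 : ℝ) (2 * π)).indicator (Set.IccExtend h02 x) := by
    funext u
    by_cases hu : u ∈ Set.Icc (0 : ℝ) (2 * π)
    · rw [pathExt_apply_of_mem x hu, Set.indicator_of_mem hu, Set.IccExtend_of_mem h02 x hu]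
    · rw [Set.indicator_of_notMem hu]; exact dif_neg hu
  rw [heq]
  exact (hx.Icc_extend').measurable.indicator measurableSet_Icc

lemma pathExt_bound (x : Set.Icc (0 : ℝ) (2 * π) → ℝ) (hx : Continuous x) :
    ∃ M : ℝ, ∀ u : ℝ, pathExt x u ≤ M := by
  have h02 : (0 : ℝ) ≤ 2 * π := by positivity
  haveI : Nonempty (Set.Icc (0 : ℝ) (2 * π)) := ⟨⟨0, Set.left_mem_Icc.mpr h02⟩⟩
  obtain ⟨v, -, hv⟩ := isCompact_univ.exists_isMaxOn Set.univ_nonempty hx.continuousOn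
  refine ⟨max (x v) 0, fun u => ?_⟩
  unfold pathExt
  split
  · exact le_max_of_le_left (hv (Set.mem_univ _))
  · exact le_max_right _ _

lemma integrable_mul_L2 {F G : ℝ → ℂ} {μ : Measure ℝ} (hF : MemLp F 2 μ) (hG : MemLp G 2 μ) :
    Integrable (fun u => F u * G u) μ := by
  refine ((hF.norm.integrable_sq.add hG.norm.integrable_sq).div_const 2).mono'
    (hF.aestronglyMeasurable.mul hG.aestronglyMeasurable) (ae_of_all _ fun u => ?_)
  simp only [Pi.add_apply, norm_mul]
  nlinarith [norm_nonneg (F u), norm_nonneg (G u), sq_nonneg (‖F u‖ - ‖G u‖)]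

lemma mergeExp (a b c d z : ℂ) :
    Complex.exp a * Complex.exp b * Complex.exp c * Complex.exp d * z
      = Complex.exp (a + b + c + d) * z := by
  rw [Complex.exp_add, Complex.exp_add, Complex.exp_add]

end Aux

/-- The maps `ρ_{λ,k}` form a representation of the centrally extended based loop group
of the `ax+b` group: `ρ_{λ,k}(α₁,b₁,s₁) ∘ ρ_{λ,k}(α₂,b₂,s₂)
  = ρ_{λ,k}(α₁+α₂, e^{α₁}b₂+b₁, s₁+s₂+k∫₀^{2π}α₁'(u)α₂(u)du)` pointwise on all
functionals `f : C₀ → ℂ` (evaluated at points of `C₀`). -/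
theorem wienerRhoC_mul (t k : ℝ) (ht : 0 < t) (lam : ℝ → ℂ)
    (hlamRe : MemLp (fun u => (lam u).re) 2 (volume.restrict (Set.Ioc 0 (2 * π))))
    (hlamIm : MemLp (fun u => (lam u).im) 2 (volume.restrict (Set.Ioc 0 (2 * π))))
    (α₁ α₂ : ℝ → ℝ) (hα₁ : ContDiff ℝ 2 α₁) (hα₂ : ContDiff ℝ 2 α₂)
    (hα₁0 : α₁ 0 = 0) (hα₂0 : α₂ 0 = 0)
    (hα₁l : α₁ (2 * π) = 0) (hα₂l : α₂ (2 * π) = 0)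
    (b₁ b₂ : ℝ → ℝ) (hb₁ : MemLp b₁ 2 (volume.restrict (Set.Ioc 0 (2 * π))))
    (hb₂ : MemLp b₂ 2 (volume.restrict (Set.Ioc 0 (2 * π)))) (s₁ s₂ : ℝ)
    (f : (Set.Icc (0 : ℝ) (2 * π) → ℝ) → ℂ)
    (x : Set.Icc (0 : ℝ) (2 * π) → ℝ) (hx : Continuous x)
    (hx0 : x ⟨0, Set.left_mem_Icc.mpr (by positivity)⟩ = 0) :
    wienerRhoC t k lam α₁ b₁ s₁ (wienerRhoC t k lam α₂ b₂ s₂ f) x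
      = wienerRhoC t k lam (α₁ + α₂) (fun u => Real.exp (α₁ u) * b₂ u + b₁ u)
          (s₁ + s₂ + k * ∫ u in (0 : ℝ)..(2 * π), deriv α₁ u * α₂ u) f x := by
  have h02 : (0 : ℝ) ≤ 2 * π := by positivity
  have hm2 : (2 * π) ∈ Set.Icc (0 : ℝ) (2 * π) := Set.right_mem_Icc.mpr h02
  have huIcc : Set.uIcc (0 : ℝ) (2 * π) = Set.Icc (0 : ℝ) (2 * π) := Set.uIcc_of_le h02
  -- derivatives
  have hd1 : Differentiable ℝ α₁ := hα₁.differentiable two_ne_zero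
  have hd2 : Differentiable ℝ α₂ := hα₂.differentiable two_ne_zero
  have h11 : ContDiff ℝ 1 (deriv α₁) := by
    have h : ContDiff ℝ (1 + 1) α₁ := by rw [one_add_one_eq_two]; exact hα₁
    exact (contDiff_succ_iff_deriv.mp h).2.2
  have h21 : ContDiff ℝ 1 (deriv α₂) := by
    have h : ContDiff ℝ (1 + 1) α₂ := by rw [one_add_one_eq_two]; exact hα₂
    exact (contDiff_succ_iff_deriv.mp h).2.2
  have hc1 : Continuous (deriv α₁) := h11.continuous
  have hc2 : Continuous (deriv α₂) := h21.continuous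
  have hd1' : Differentiable ℝ (deriv α₁) := h11.differentiable one_ne_zero
  have hd2' : Differentiable ℝ (deriv α₂) := h21.differentiable one_ne_zero
  have hc1' : Continuous (deriv (deriv α₁)) := h11.continuous_deriv le_rfl
  have hc2' : Continuous (deriv (deriv α₂)) := h21.continuous_deriv le_rfl
  -- integrability of continuous-on functions
  have key : ∀ g : ℝ → ℝ, ContinuousOn g (Set.Icc (0 : ℝ) (2 * π)) →
      IntervalIntegrable g volume 0 (2 * π) := fun g hg =>
    ContinuousOn.intervalIntegrable (by rwa [huIcc])
  -- pathExt facts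
  have hyc : ContinuousOn (pathExt x) (Set.Icc (0 : ℝ) (2 * π)) := pathExt_continuousOn x hx
  have hx'cont : Continuous (x + fun u : Set.Icc (0 : ℝ) (2 * π) => α₁ u.1) :=
    hx.add (hα₁.continuous.comp continuous_subtype_val)
  have hzc : ContinuousOn (pathExt (x + fun u => α₁ u.1)) (Set.Icc (0 : ℝ) (2 * π)) :=
    pathExt_continuousOn _ hx'cont
  have hzy : ∀ u ∈ Set.Icc (0 : ℝ) (2 * π),
      pathExt (x + fun u => α₁ u.1) u = pathExt x u + α₁ u := by
    intro u hu
    rw [pathExt_apply_of_mem _ hu, pathExt_apply_of_mem x hu]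
    rfl
  have hz2 : pathExt (x + fun u => α₁ u.1) (2 * π) = pathExt x (2 * π) := by
    rw [hzy _ hm2, hα₁l, add_zero]
  -- basic interval integrabilities
  have hIy1 : IntervalIntegrable (fun u => pathExt x u * deriv α₁ u) volume 0 (2 * π) :=
    key _ (hyc.mul hc1.continuousOn)
  have hIy2 : IntervalIntegrable (fun u => pathExt x u * deriv α₂ u) volume 0 (2 * π) :=
    key _ (hyc.mul hc2.continuousOn)
  have hIydd1 : IntervalIntegrable (fun u => pathExt x u * deriv (deriv α₁) u) volume 0 (2 * π) :=
    key _ (hyc.mul hc1'.continuousOn)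
  have hIydd2 : IntervalIntegrable (fun u => pathExt x u * deriv (deriv α₂) u) volume 0 (2 * π) :=
    key _ (hyc.mul hc2'.continuousOn)
  -- IBP
  have hu1 : ∀ u ∈ Set.uIcc (0 : ℝ) (2 * π), HasDerivAt α₁ (deriv α₁ u) u :=
    fun u _ => (hd1 u).hasDerivAt
  have hu2 : ∀ u ∈ Set.uIcc (0 : ℝ) (2 * π), HasDerivAt α₂ (deriv α₂ u) u :=
    fun u _ => (hd2 u).hasDerivAt
  have hv2' : ∀ u ∈ Set.uIcc (0 : ℝ) (2 * π), HasDerivAt (deriv α₂) (deriv (deriv α₂) u) u :=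
    fun u _ => (hd2' u).hasDerivAt
  have hIBP1 : ∫ u in (0 : ℝ)..(2 * π), α₁ u * deriv α₂ u
      = -∫ u in (0 : ℝ)..(2 * π), deriv α₁ u * α₂ u := by
    have h := intervalIntegral.integral_mul_deriv_eq_deriv_mul hu1 hu2
      (key _ hc1.continuousOn) (key _ hc2.continuousOn)
    rw [h, hα₁l, hα₁0]
    ring
  have hIBP2 : ∫ u in (0 : ℝ)..(2 * π), α₁ u * deriv (deriv α₂) u
      = -∫ u in (0 : ℝ)..(2 * π), deriv α₁ u * deriv α₂ u := by
    have h := intervalIntegral.integral_mul_deriv_eq_deriv_mul hu1 hv2'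
      (key _ hc1.continuousOn) (key _ hc2'.continuousOn)
    rw [h, hα₁l, hα₁0]
    ring
  -- derivative of sums
  have hDadd : deriv (α₁ + α₂) = fun u => deriv α₁ u + deriv α₂ u :=
    funext fun u => deriv_add (hd1 u) (hd2 u)
  have hDDadd : deriv (deriv (α₁ + α₂)) = fun u => deriv (deriv α₁) u + deriv (deriv α₂) u := by
    rw [hDadd]
    exact funext fun u => deriv_add (hd1' u) (hd2' u)
  -- real integral identities
  have Hy_dd : ∫ u in (0 : ℝ)..(2 * π), pathExt x u * deriv (α₁ + α₂) u
      = (∫ u in (0 : ℝ)..(2 * π), pathExt x u * deriv α₁ u)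
        + ∫ u in (0 : ℝ)..(2 * π), pathExt x u * deriv α₂ u := by
    simp only [hDadd, mul_add]
    exact intervalIntegral.integral_add hIy1 hIy2
  have Hsq : ∫ u in (0 : ℝ)..(2 * π), (deriv (α₁ + α₂) u) ^ 2
      = (∫ u in (0 : ℝ)..(2 * π), (deriv α₁ u) ^ 2)
        + (2 * ∫ u in (0 : ℝ)..(2 * π), deriv α₁ u * deriv α₂ u)
        + ∫ u in (0 : ℝ)..(2 * π), (deriv α₂ u) ^ 2 := by
    simp only [hDadd]
    rw [intervalIntegral.integral_congr
      (g := fun u => (deriv α₁ u) ^ 2 + (2 * (deriv α₁ u * deriv α₂ u) + (deriv α₂ u) ^ 2))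
      (fun u _ => by ring)]
    rw [intervalIntegral.integral_add (key (fun u => (deriv α₁ u) ^ 2) ((hc1.pow 2).continuousOn))
      (((key (fun u => deriv α₁ u * deriv α₂ u) ((hc1.mul hc2).continuousOn)).const_mul 2).add (key (fun u => (deriv α₂ u) ^ 2) ((hc2.pow 2).continuousOn))),
      intervalIntegral.integral_add ((key (fun u => deriv α₁ u * deriv α₂ u) ((hc1.mul hc2).continuousOn)).const_mul 2)
        (key (fun u => (deriv α₂ u) ^ 2) ((hc2.pow 2).continuousOn)),
      intervalIntegral.integral_const_mul]
    ring
  have Hz_d2 : ∫ u in (0 : ℝ)..(2 * π), pathExt (x + fun u => α₁ u.1) u * deriv α₂ u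
      = (∫ u in (0 : ℝ)..(2 * π), pathExt x u * deriv α₂ u)
        + ∫ u in (0 : ℝ)..(2 * π), α₁ u * deriv α₂ u := by
    rw [intervalIntegral.integral_congr
      (g := fun u => pathExt x u * deriv α₂ u + α₁ u * deriv α₂ u)
      (fun u hu => by rw [huIcc] at hu; rw [hzy u hu]; ring)]
    exact intervalIntegral.integral_add hIy2 (key _ ((hα₁.continuous.mul hc2).continuousOn))
  have Hz_dd2 : ∫ u in (0 : ℝ)..(2 * π), pathExt (x + fun u => α₁ u.1) u * deriv (deriv α₂) u
      = (∫ u in (0 : ℝ)..(2 * π), pathExt x u * deriv (deriv α₂) u)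
        + ∫ u in (0 : ℝ)..(2 * π), α₁ u * deriv (deriv α₂) u := by
    rw [intervalIntegral.integral_congr
      (g := fun u => pathExt x u * deriv (deriv α₂) u + α₁ u * deriv (deriv α₂) u)
      (fun u hu => by rw [huIcc] at hu; rw [hzy u hu]; ring)]
    exact intervalIntegral.integral_add hIydd2 (key _ ((hα₁.continuous.mul hc2').continuousOn))
  -- pairing identities
  have HW2 : wienerPairing α₂ (x + fun u => α₁ u.1)
      = wienerPairing α₂ x + ∫ u in (0 : ℝ)..(2 * π), deriv α₁ u * deriv α₂ u := by
    unfold wienerPairing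
    rw [hz2, Hz_dd2, hIBP2]
    ring
  have HWadd : wienerPairing (α₁ + α₂) x = wienerPairing α₁ x + wienerPairing α₂ x := by
    unfold wienerPairing
    have hD2π : deriv (α₁ + α₂) (2 * π) = deriv α₁ (2 * π) + deriv α₂ (2 * π) := by
      rw [hDadd]
    rw [hD2π, hDDadd]
    simp only [mul_add]
    rw [intervalIntegral.integral_add hIydd1 hIydd2]
    ring
  -- the real exponent identity
  have Hreal : (-(1 / (4 * t)) * ∫ u in (0 : ℝ)..(2 * π), (deriv (α₁ + α₂) u) ^ 2)
        - (1 / (2 * t)) * wienerPairing (α₁ + α₂) x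
      = ((-(1 / (4 * t)) * ∫ u in (0 : ℝ)..(2 * π), (deriv α₁ u) ^ 2)
          - (1 / (2 * t)) * wienerPairing α₁ x)
        + ((-(1 / (4 * t)) * ∫ u in (0 : ℝ)..(2 * π), (deriv α₂ u) ^ 2)
          - (1 / (2 * t)) * wienerPairing α₂ (x + fun u => α₁ u.1)) := by
    rw [Hsq, HWadd, HW2]
    field_simp
    ring
  -- the imaginary-exponent identity
  have HX : (α₁ (2 * π) * pathExt x (2 * π)
        - ∫ u in (0 : ℝ)..(2 * π), pathExt x u * deriv α₁ u)
      + (α₂ (2 * π) * pathExt (x + fun u => α₁ u.1) (2 * π)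
        - ∫ u in (0 : ℝ)..(2 * π), pathExt (x + fun u => α₁ u.1) u * deriv α₂ u)
      = (∫ u in (0 : ℝ)..(2 * π), deriv α₁ u * α₂ u)
        + ((α₁ + α₂) (2 * π) * pathExt x (2 * π)
          - ∫ u in (0 : ℝ)..(2 * π), pathExt x u * deriv (α₁ + α₂) u) := by
    rw [Hz_d2, hIBP1, Hy_dd]
    simp only [Pi.add_apply, hα₁l, hα₂l]
    ring
  -- the λ-part
  have hlam : MemLp lam 2 (volume.restrict (Set.Ioc 0 (2 * π))) :=
    memLp_re_im_iff.mp ⟨by simpa using hlamRe, by simpa using hlamIm⟩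
  obtain ⟨M, hM⟩ := pathExt_bound x hx
  have hEmeas : AEStronglyMeasurable (fun u => Complex.exp ((pathExt x u : ℝ) : ℂ))
      (volume.restrict (Set.Ioc 0 (2 * π))) :=
    ((Complex.continuous_exp.comp Complex.continuous_ofReal).measurable.comp
      (pathExt_measurable x hx)).aestronglyMeasurable
  have hEnorm : ∀ u : ℝ, ‖Complex.exp ((pathExt x u : ℝ) : ℂ)‖ ≤ Real.exp M := by
    intro u
    rw [show ‖Complex.exp ((pathExt x u : ℝ) : ℂ)‖ = Real.exp (pathExt x u) by
      rw [Complex.norm_exp, Complex.ofReal_re]]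
    exact Real.exp_le_exp.mpr (hM u)
  have hGmem : ∀ b : ℝ → ℝ, MemLp b 2 (volume.restrict (Set.Ioc 0 (2 * π))) →
      MemLp (fun u => ((b u : ℝ) : ℂ) * Complex.exp ((pathExt x u : ℝ) : ℂ)) 2
        (volume.restrict (Set.Ioc 0 (2 * π))) := by
    intro b hb
    refine MemLp.of_le_mul (c := Real.exp M)
      (MemLp.ofReal hb : MemLp (fun u => ((b u : ℝ) : ℂ)) 2 _)
      ((MemLp.ofReal hb : MemLp (fun u => ((b u : ℝ) : ℂ)) 2 _).aestronglyMeasurable.mul hEmeas) (ae_of_all _ fun u => ?_)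
    rw [norm_mul, mul_comm]
    exact mul_le_mul_of_nonneg_right (hEnorm u) (norm_nonneg _)
  have hIntlam : ∀ b : ℝ → ℝ, MemLp b 2 (volume.restrict (Set.Ioc 0 (2 * π))) →
      IntervalIntegrable
        (fun u => lam u * ((b u : ℝ) : ℂ) * Complex.exp ((pathExt x u : ℝ) : ℂ))
        volume 0 (2 * π) := by
    intro b hb
    rw [intervalIntegrable_iff, Set.uIoc_of_le h02]
    have h := integrable_mul_L2 hlam (hGmem b hb)
    simpa [mul_assoc, IntegrableOn] using h
  -- e^{α₁} b₂ is in L²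
  obtain ⟨v, -, hv⟩ := isCompact_Icc.exists_isMaxOn
    ⟨0, Set.left_mem_Icc.mpr h02⟩ hα₁.continuous.continuousOn
  have hb₂' : MemLp (fun u => Real.exp (α₁ u) * b₂ u) 2
      (volume.restrict (Set.Ioc 0 (2 * π))) := by
    refine MemLp.of_le_mul (c := Real.exp (α₁ v)) hb₂
      (((Real.continuous_exp.comp hα₁.continuous).aestronglyMeasurable).mul
        hb₂.aestronglyMeasurable) ?_
    filter_upwards [ae_restrict_mem measurableSet_Ioc] with u hu
    have hu' : u ∈ Set.Icc (0 : ℝ) (2 * π) := Set.Ioc_subset_Icc_self hu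
    rw [Real.norm_eq_abs, Real.norm_eq_abs, abs_mul, abs_of_pos (Real.exp_pos _)]
    exact mul_le_mul_of_nonneg_right (Real.exp_le_exp.mpr (hv hu')) (abs_nonneg _)
  have HΛ2 : ∫ u in (0 : ℝ)..(2 * π), lam u * ((b₂ u : ℝ) : ℂ)
        * Complex.exp ((pathExt (x + fun u => α₁ u.1) u : ℝ) : ℂ)
      = ∫ u in (0 : ℝ)..(2 * π), lam u * ((Real.exp (α₁ u) * b₂ u : ℝ) : ℂ)
        * Complex.exp ((pathExt x u : ℝ) : ℂ) := by
    refine intervalIntegral.integral_congr fun u hu => ?_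
    rw [huIcc] at hu
    rw [hzy u hu]
    push_cast [Complex.ofReal_exp, Complex.exp_add]
    ring
  have HΛsplit : ∫ u in (0 : ℝ)..(2 * π),
        lam u * ((Real.exp (α₁ u) * b₂ u + b₁ u : ℝ) : ℂ)
          * Complex.exp ((pathExt x u : ℝ) : ℂ)
      = (∫ u in (0 : ℝ)..(2 * π), lam u * ((Real.exp (α₁ u) * b₂ u : ℝ) : ℂ)
          * Complex.exp ((pathExt x u : ℝ) : ℂ))
        + ∫ u in (0 : ℝ)..(2 * π), lam u * ((b₁ u : ℝ) : ℂ)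
          * Complex.exp ((pathExt x u : ℝ) : ℂ) := by
    rw [← intervalIntegral.integral_add (hIntlam _ hb₂') (hIntlam _ hb₁)]
    refine intervalIntegral.integral_congr fun u hu => ?_
    push_cast
    ring
  have HΛ : (∫ u in (0 : ℝ)..(2 * π), lam u * ((b₁ u : ℝ) : ℂ)
        * Complex.exp ((pathExt x u : ℝ) : ℂ))
      + (∫ u in (0 : ℝ)..(2 * π), lam u * ((b₂ u : ℝ) : ℂ)
        * Complex.exp ((pathExt (x + fun u => α₁ u.1) u : ℝ) : ℂ))
      = ∫ u in (0 : ℝ)..(2 * π), lam u * ((Real.exp (α₁ u) * b₂ u + b₁ u : ℝ) : ℂ)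
        * Complex.exp ((pathExt x u : ℝ) : ℂ) := by
    rw [HΛ2, HΛsplit]
    ring
  -- assemble
  simp only [wienerRhoC]
  rw [mergeExp, mergeExp, mergeExp, ← mul_assoc, ← Complex.exp_add]
  congr 1
  · -- exponents
    congr 1
    have HXC := congrArg (fun r : ℝ => (r : ℂ)) HX
    have HrealC := congrArg (fun r : ℝ => (r : ℂ)) Hreal
    push_cast at HXC HrealC HΛ ⊢
    linear_combination Complex.I * (k : ℂ) * HXC - HrealC + HΛ
  · -- the argument of f
    congr 1
    funext u
    simp only [Pi.add_apply]
    ring
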